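/- Assume additionally that ρ (N−1) ≤ 2 · ρ 0. Then every eigenvalue μ of the real symmetric tridiagonal matrix C satisfies μ ≤ 4 / δρ⋆. -/

import Mathlib

open Matrix Finset

/-- If `ρ (N-1) ≤ 2 ρ 0`, every eigenvalue of the tridiagonal matrix `C`
is at most `4 / δρ⋆`, where `δρ⋆` is the minimal adjacent density gap. -/
theorem tridiagonal_max_eigenvalue_upper_bound
    (N : ℕ) (hN : 2 ≤ N) (ρ : ℕ → ℝ)
    (hρ : ∀ i j, i < j → j < N → ρ i < ρ j) (hρ0 : 0 < ρ 0)
    (hρN : ρ (N - 1) ≤ 2 * ρ 0)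
    (C : Matrix (Fin N) (Fin N) ℝ)
    (hC : ∀ i j : Fin N, C i j =
      if i.val = j.val then
        (if i.val = 0 then 1 / ρ 0 + 1 / (ρ 1 - ρ 0)
         else if i.val = N - 1 then 1 / (ρ (N - 1) - ρ (N - 2))
         else 1 / (ρ i.val - ρ (i.val - 1)) + 1 / (ρ (i.val + 1) - ρ i.val))
      else if i.val + 1 = j.val ∨ j.val + 1 = i.val then
        -(1 / (ρ (max i.val j.val) - ρ (min i.val j.val)))
      else 0)
    (hHerm : C.IsHermitian)
    (δ : ℝ)
    (hδ : δ = Finset.inf' (Finset.range (N - 1))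
        ⟨0, Finset.mem_range.mpr (by omega)⟩ (fun i => ρ (i + 1) - ρ i)) :
    ∀ i : Fin N, hHerm.eigenvalues i ≤ 4 / δ := by
  intro i
  classical
  -- basic facts about δ and the gaps
  have hgappos : ∀ m : ℕ, m < N - 1 → 0 < ρ (m + 1) - ρ m := by
    intro m hm
    have := hρ m (m + 1) (by omega) (by omega)
    linarith
  have hgap : ∀ m : ℕ, m < N - 1 → δ ≤ ρ (m + 1) - ρ m := by
    intro m hm
    rw [hδ]
    exact Finset.inf'_le _ (Finset.mem_range.mpr hm)
  have hδpos : 0 < δ := by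
    rw [hδ]
    refine (Finset.lt_inf'_iff _).2 ?_
    intro m hm
    exact hgappos m (Finset.mem_range.mp hm)
  have hδρ0 : δ ≤ ρ 0 := by
    have h1 : δ ≤ ρ 1 - ρ 0 := hgap 0 (by omega)
    have h2 : ρ 1 ≤ ρ (N - 1) := by
      rcases Nat.lt_or_ge 1 (N - 1) with h | h
      · exact le_of_lt (hρ 1 (N - 1) h (by omega))
      · have : N - 1 = 1 := by omega
        rw [this]
    linarith
  -- the eigenvalue is an eigenvalue of `toLin' C`
  set μ := hHerm.eigenvalues i with hμ
  have hvne : (hHerm.eigenvectorBasis i : EuclideanSpace ℝ (Fin N)) ≠ 0 :=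
    hHerm.eigenvectorBasis.orthonormal.ne_zero i
  have hev : Module.End.HasEigenvalue (Matrix.toLin' C) μ := by
    apply Module.End.hasEigenvalue_of_hasEigenvector
      (x := WithLp.ofLp (hHerm.eigenvectorBasis i : EuclideanSpace ℝ (Fin N)))
    refine ⟨Module.End.mem_eigenspace_iff.mpr ?_, (WithLp.ofLp_eq_zero 2).ne.2 hvne⟩
    have h := hHerm.mulVec_eigenvectorBasis i
    ext j
    have := congrFun h j
    simpa [Matrix.toLin'_apply] using this
  obtain ⟨k, hk⟩ := eigenvalue_mem_ball hev
  rw [Metric.mem_closedBall, Real.dist_eq] at hk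
  have h1 : μ ≤ C k k + ∑ j ∈ Finset.univ.erase k, ‖C k j‖ :=
    by linarith [(abs_sub_le_iff.mp hk).1]
  have h2 : ∑ j ∈ Finset.univ.erase k, ‖C k j‖ = (∑ j, ‖C k j‖) - ‖C k k‖ :=
    Finset.sum_erase_eq_sub (Finset.mem_univ k)
  have h3 : μ ≤ ∑ j, ‖C k j‖ := by
    have := le_abs_self (C k k)
    rw [h2] at h1
    rw [Real.norm_eq_abs] at *
    linarith
  -- pointwise bound on the row entries
  have hpt : ∀ j : Fin N, ‖C k j‖ ≤
      (if j = k then 2 / δ else 0) + (if j.val = k.val + 1 then 1 / δ else 0)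
        + (if j.val + 1 = k.val then 1 / δ else 0) := by
    intro j
    rw [hC k j, Real.norm_eq_abs]
    by_cases hkj : k.val = j.val
    · have hj : j = k := Fin.ext hkj.symm
      subst hj
      have hb : ((if (j : Fin N) = j then (2 : ℝ) / δ else 0)
          + (if (j : Fin N).val = (j : Fin N).val + 1 then (1 : ℝ) / δ else 0)
          + (if (j : Fin N).val + 1 = (j : Fin N).val then (1 : ℝ) / δ else 0)) = 2 / δ := by
        rw [if_pos rfl, if_neg (by omega), if_neg (by omega)]
        ring
      rw [hb, if_pos rfl]
      set k := j with hkdef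
      by_cases hk0 : k.val = 0
      · rw [if_pos hk0]
        have g0 : 0 < ρ 1 - ρ 0 := hgappos 0 (by omega)
        have d1 : 1 / ρ 0 ≤ 1 / δ := one_div_le_one_div_of_le hδpos hδρ0
        have d2 : 1 / (ρ 1 - ρ 0) ≤ 1 / δ :=
          one_div_le_one_div_of_le hδpos (hgap 0 (by omega))
        have hnn : 0 ≤ 1 / ρ 0 + 1 / (ρ 1 - ρ 0) := by positivity
        rw [abs_of_nonneg hnn]
        have h2d : (2 : ℝ) / δ = 1 / δ + 1 / δ := by ring
        linarith
      · rw [if_neg hk0]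
        by_cases hkN : k.val = N - 1
        · rw [if_pos hkN]
          have e1 : N - 2 + 1 = N - 1 := by omega
          have g : 0 < ρ (N - 1) - ρ (N - 2) := by
            have := hgappos (N - 2) (by omega); rwa [e1] at this
          have d : δ ≤ ρ (N - 1) - ρ (N - 2) := by
            have := hgap (N - 2) (by omega); rwa [e1] at this
          have d2 : 1 / (ρ (N - 1) - ρ (N - 2)) ≤ 1 / δ :=
            one_div_le_one_div_of_le hδpos d
          rw [abs_of_nonneg (by positivity)]
          have hd : 0 ≤ 1 / δ := by positivity
          have h2d : (2 : ℝ) / δ = 1 / δ + 1 / δ := by ring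
          linarith
        · rw [if_neg hkN]
          have hk1 : 1 ≤ k.val := by omega
          have hkN1 : k.val < N - 1 := by have := k.isLt; omega
          have e1 : k.val - 1 + 1 = k.val := by omega
          have gl : 0 < ρ k.val - ρ (k.val - 1) := by
            have := hgappos (k.val - 1) (by omega); rwa [e1] at this
          have dl : δ ≤ ρ k.val - ρ (k.val - 1) := by
            have := hgap (k.val - 1) (by omega); rwa [e1] at this
          have gr : 0 < ρ (k.val + 1) - ρ k.val := hgappos k.val hkN1
          have dr : δ ≤ ρ (k.val + 1) - ρ k.val := hgap k.val hkN1
          have d1 : 1 / (ρ k.val - ρ (k.val - 1)) ≤ 1 / δ :=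
            one_div_le_one_div_of_le hδpos dl
          have d2 : 1 / (ρ (k.val + 1) - ρ k.val) ≤ 1 / δ :=
            one_div_le_one_div_of_le hδpos dr
          rw [abs_of_nonneg (by positivity)]
          have h2d : (2 : ℝ) / δ = 1 / δ + 1 / δ := by ring
          linarith
    · rw [if_neg hkj, if_neg (fun h => hkj (congrArg Fin.val h).symm)]
      by_cases hadj : k.val + 1 = j.val ∨ j.val + 1 = k.val
      · rw [if_pos hadj]
        rcases hadj with h | h
        · rw [if_pos h.symm, if_neg (by omega)]
          have hmax : max k.val j.val = k.val + 1 := by omega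
          have hmin : min k.val j.val = k.val := by omega
          rw [hmax, hmin]
          have hkN1 : k.val < N - 1 := by have := j.isLt; omega
          have g : 0 < ρ (k.val + 1) - ρ k.val := hgappos k.val hkN1
          have d : δ ≤ ρ (k.val + 1) - ρ k.val := hgap k.val hkN1
          have : |-(1 / (ρ (k.val + 1) - ρ k.val))| = 1 / (ρ (k.val + 1) - ρ k.val) := by
            rw [abs_neg, abs_of_nonneg (by positivity)]
          rw [this]
          have := one_div_le_one_div_of_le hδpos d
          linarith
        · rw [if_neg (by omega), if_pos h]
          have hmax : max k.val j.val = j.val + 1 := by omega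
          have hmin : min k.val j.val = j.val := by omega
          rw [hmax, hmin]
          have hjN1 : j.val < N - 1 := by have := k.isLt; omega
          have g : 0 < ρ (j.val + 1) - ρ j.val := hgappos j.val hjN1
          have d : δ ≤ ρ (j.val + 1) - ρ j.val := hgap j.val hjN1
          have : |-(1 / (ρ (j.val + 1) - ρ j.val))| = 1 / (ρ (j.val + 1) - ρ j.val) := by
            rw [abs_neg, abs_of_nonneg (by positivity)]
          rw [this]
          have := one_div_le_one_div_of_le hδpos d
          linarith
      · rw [if_neg hadj, abs_zero]
        have hd : 0 ≤ 1 / δ := by positivity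
        rw [if_neg (by omega), if_neg (by omega)]
        norm_num
  -- summing the pointwise bound
  have hone : ∀ (p : Fin N → Prop) (_ : DecidablePred p) (c : ℝ), 0 ≤ c →
      (∀ a b : Fin N, p a → p b → a = b) →
      (∑ j : Fin N, if p j then c else 0) ≤ c := by
    intro p hp c hc huniq
    rw [← Finset.sum_filter]
    rw [Finset.sum_const, nsmul_eq_mul]
    have hcard : (Finset.univ.filter p).card ≤ 1 :=
      Finset.card_le_one.mpr (fun a ha b hb =>
        huniq a b (Finset.mem_filter.mp ha).2 (Finset.mem_filter.mp hb).2)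
    calc ((Finset.univ.filter p).card : ℝ) * c ≤ 1 * c := by
          apply mul_le_mul_of_nonneg_right _ hc
          exact_mod_cast hcard
      _ = c := one_mul c
  have hsum : ∑ j, ‖C k j‖ ≤ 2 / δ + 1 / δ + 1 / δ := by
    calc ∑ j, ‖C k j‖
        ≤ ∑ j : Fin N, ((if j = k then 2 / δ else 0)
            + (if j.val = k.val + 1 then 1 / δ else 0)
            + (if j.val + 1 = k.val then 1 / δ else 0)) :=
          Finset.sum_le_sum (fun j _ => hpt j)
      _ = (∑ j : Fin N, if j = k then (2 : ℝ) / δ else 0)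
            + (∑ j : Fin N, if j.val = k.val + 1 then (1 : ℝ) / δ else 0)
            + (∑ j : Fin N, if j.val + 1 = k.val then (1 : ℝ) / δ else 0) := by
          rw [Finset.sum_add_distrib, Finset.sum_add_distrib]
      _ ≤ 2 / δ + 1 / δ + 1 / δ := by
          have e1 : (∑ j : Fin N, if j = k then (2 : ℝ) / δ else 0) = 2 / δ := by
            rw [Finset.sum_ite_eq' Finset.univ k (fun _ => (2 : ℝ) / δ),
              if_pos (Finset.mem_univ k)]
          have e2 : (∑ j : Fin N, if j.val = k.val + 1 then (1 : ℝ) / δ else 0) ≤ 1 / δ :=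
            hone _ _ _ (by positivity) (fun a b ha hb => Fin.ext (by omega))
          have e3 : (∑ j : Fin N, if j.val + 1 = k.val then (1 : ℝ) / δ else 0) ≤ 1 / δ :=
            hone _ _ _ (by positivity) (fun a b ha hb => Fin.ext (by omega))
          linarith
  have : (2 : ℝ) / δ + 1 / δ + 1 / δ = 4 / δ := by ring
  linarith [h3, hsum, this]
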